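/- (Deformed Bloch–Okounkov one-point function) Let v, q, t be complex numbers with |v| < 1, |q| < 1 and |t| < 1. Then all series and products below converge absolutely and Σ_{λ∈𝒫} v^{|λ|} · (1/(1−q)) Σ_{i=1}^∞ t^{i−1} q^{λ_i} = ( ∏_{i≥0} (1 − q t v^{i+1}) ) / ( ∏_{i≥0} (1 − q v^i)(1 − t v^i) ). -/

import Mathlib

set_option maxHeartbeats 1000000

/-- A partition: a nonincreasing sequence of nonnegative integers (0-indexed)
with only finitely many nonzero terms. -/
structure IntPartition where
  parts : ℕ → ℕ
  antitone' : Antitone parts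
  finite_support' : ∃ N, ∀ i, N ≤ i → parts i = 0

/-- The weight `|λ| = Σ_i λ_i` of a partition. -/
noncomputable def IntPartition.wt (lam : IntPartition) : ℕ := ∑' i : ℕ, lam.parts i

open Filter Topology Finset

namespace BO


lemma one_sub_ne_zero {z : ℂ} (hz : ‖z‖ < 1) : (1 : ℂ) - z ≠ 0 := by
  intro h
  have : z = 1 := by linear_combination -h
  rw [this] at hz; simp at hz

variable {w : ℕ → ℂ} {r : ℝ}

lemma norm_w_lt_one (hr0 : 0 ≤ r) (hr1 : r < 1) (hw : ∀ j, ‖w j‖ ≤ r ^ (j+1)) (j : ℕ) :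
    ‖w j‖ < 1 :=
  lt_of_le_of_lt (hw j) (pow_lt_one₀ hr0 hr1 (Nat.succ_ne_zero j))

lemma summable_log (hr0 : 0 ≤ r) (hr1 : r < 1) (hw : ∀ j, ‖w j‖ ≤ r ^ (j+1)) :
    Summable fun j => Complex.log (1 - w j) := by
  obtain ⟨M, hM⟩ : ∃ M, r ^ (M + 1) ≤ 1 / 2 := by
    obtain ⟨M, hM⟩ := exists_pow_lt_of_lt_one (by norm_num : (0:ℝ) < 1/2) hr1
    exact ⟨M, le_trans (pow_le_pow_of_le_one hr0 hr1.le (by omega)) hM.le⟩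
  rw [← summable_nat_add_iff M]
  have hgeom : Summable fun j : ℕ => 3 / 2 * (r ^ (M + 1) * r ^ j) :=
    ((summable_geometric_of_lt_one hr0 hr1).mul_left _).mul_left _
  refine hgeom.of_norm_bounded fun j => ?_
  have h1 : ‖-(w (j + M))‖ ≤ 1 / 2 := by
    rw [norm_neg]
    exact le_trans (hw _) (le_trans (pow_le_pow_of_le_one hr0 hr1.le (by omega)) hM)
  have := Complex.norm_log_one_add_half_le_self h1
  rw [show (1 : ℂ) + -(w (j + M)) = 1 - w (j + M) by ring] at this
  refine le_trans this ?_
  rw [norm_neg]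
  have : ‖w (j + M)‖ ≤ r ^ (M + 1) * r ^ j := by
    refine le_trans (hw _) ?_
    rw [← pow_add]
    exact pow_le_pow_of_le_one hr0 hr1.le (by omega)
  nlinarith [norm_nonneg (w (j + M))]

lemma tprod_eq_exp (hr0 : 0 ≤ r) (hr1 : r < 1) (hw : ∀ j, ‖w j‖ ≤ r ^ (j+1)) :
    ∏' j : ℕ, (1 - w j) = Complex.exp (∑' j : ℕ, Complex.log (1 - w j)) := by
  have := Complex.cexp_tsum_eq_tprod (f := fun n => 1 - w n)
    (fun n => one_sub_ne_zero (norm_w_lt_one hr0 hr1 hw n))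
    (summable_log hr0 hr1 hw)
  exact this.symm

lemma multipliable_one_sub (hr0 : 0 ≤ r) (hr1 : r < 1) (hw : ∀ j, ‖w j‖ ≤ r ^ (j+1)) :
    Multipliable fun j : ℕ => 1 - w j :=
  Complex.multipliable_of_summable_log (f := fun n => 1 - w n)
    (summable_log hr0 hr1 hw)

lemma tprod_ne_zero (hr0 : 0 ≤ r) (hr1 : r < 1) (hw : ∀ j, ‖w j‖ ≤ r ^ (j+1)) :
    ∏' j : ℕ, (1 - w j) ≠ 0 := by
  rw [tprod_eq_exp hr0 hr1 hw]; exact Complex.exp_ne_zero _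

lemma hw_shift (hr0 : 0 ≤ r) (hr1 : r < 1) (hw : ∀ j, ‖w j‖ ≤ r ^ (j+1)) (k : ℕ) :
    ∀ j, ‖w (j + k)‖ ≤ r ^ (j + 1) := fun j =>
  le_trans (hw _) (pow_le_pow_of_le_one hr0 hr1.le (by omega))

lemma tprod_split (hr0 : 0 ≤ r) (hr1 : r < 1) (hw : ∀ j, ‖w j‖ ≤ r ^ (j+1)) (k : ℕ) :
    ∏' j : ℕ, (1 - w j) =
      (∏ j ∈ range k, (1 - w j)) * ∏' j : ℕ, (1 - w (j + k)) := by
  rw [tprod_eq_exp hr0 hr1 hw, tprod_eq_exp hr0 hr1 (hw_shift hr0 hr1 hw k),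
    ← Summable.sum_add_tsum_nat_add k (summable_log hr0 hr1 hw), Complex.exp_add]
  congr 1
  rw [Complex.exp_sum]
  exact Finset.prod_congr rfl fun j _ =>
    Complex.exp_log (one_sub_ne_zero (norm_w_lt_one hr0 hr1 hw j))



/-- weight of a finitely supported sequence of multiplicities -/
noncomputable def wtF (d : ℕ →₀ ℕ) : ℕ := d.sum fun j n => (j + 1) * n

/-- the product `∏ j, w j ^ d j` -/
noncomputable def FF (w : ℕ → ℂ) (d : ℕ →₀ ℕ) : ℂ := d.prod fun j n => w j ^ n

lemma FF_add (w : ℕ → ℂ) (d e : ℕ →₀ ℕ) : FF w (d + e) = FF w d * FF w e :=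
  Finsupp.prod_add_index' (fun _ => pow_zero _) (fun a b₁ b₂ => pow_add _ _ _)

lemma FF_single (w : ℕ → ℂ) (N n : ℕ) : FF w (Finsupp.single N n) = w N ^ n :=
  Finsupp.prod_single_index (pow_zero _)

lemma FF_zero (w : ℕ → ℂ) : FF w 0 = 1 := rfl

lemma wtF_eq_sum_range {d : ℕ →₀ ℕ} {N : ℕ} (h : ∀ j ∈ d.support, j < N) :
    wtF d = ∑ k ∈ range N, (k + 1) * d k := by
  rw [wtF, Finsupp.sum_of_support_subset d (fun j hj => Finset.mem_range.2 (h j hj))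
    (fun j n => (j + 1) * n) (fun j _ => by ring)]

lemma norm_FF_le {w : ℕ → ℂ} {r : ℝ} (hr0 : 0 ≤ r) (hw : ∀ j, ‖w j‖ ≤ r ^ (j + 1))
    (d : ℕ →₀ ℕ) : ‖FF w d‖ ≤ r ^ wtF d := by
  rw [FF, Finsupp.prod, norm_prod, wtF, Finsupp.sum, ← Finset.prod_pow_eq_pow_sum]
  refine Finset.prod_le_prod (fun j _ => norm_nonneg _) fun j _ => ?_
  rw [norm_pow]
  calc ‖w j‖ ^ d j ≤ (r ^ (j + 1)) ^ d j :=
        pow_le_pow_left₀ (norm_nonneg _) (hw j) _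
    _ = r ^ ((j + 1) * d j) := by rw [← pow_mul]

/-- summability of `d ↦ r ^ wt d` over all finitely supported multiplicity sequences. -/
lemma summable_rpow_wtF {r : ℝ} (hr0 : 0 ≤ r) (hr1 : r < 1) :
    Summable fun d : ℕ →₀ ℕ => r ^ wtF d := by
  classical
  set A := (1 - r)⁻¹ with hA
  have hA0 : 0 < A := inv_pos.2 (by linarith)
  have hgeo : ∀ x : ℝ, 0 ≤ x → x ≤ r → ∀ n : ℕ, ∑ k ∈ range n, x ^ k ≤ A := by
    intro x hx0 hxr n
    have hx1 : x < 1 := lt_of_le_of_lt hxr hr1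
    calc ∑ k ∈ range n, x ^ k ≤ ∑' k : ℕ, x ^ k :=
          Summable.sum_le_tsum _ (fun k _ => pow_nonneg hx0 _) (summable_geometric_of_lt_one hx0 hx1)
      _ = (1 - x)⁻¹ := tsum_geometric_of_lt_one hx0 hx1
      _ ≤ A := by
          rw [hA]
          exact inv_anti₀ (by linarith) (by linarith)
  refine summable_of_sum_le (c := Real.exp (A * (A * r)))
    (fun d => pow_nonneg hr0 _) fun u => ?_
  -- choose a box containing all elements of u
  set N := u.sup fun d => (d.support.sup id) + 1 with hN
  set M := u.sup fun d => d.sum fun _ n => n with hM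
  have hsupp : ∀ d ∈ u, ∀ j ∈ d.support, j < N := by
    intro d hd j hj
    have h1 : j + 1 ≤ (d.support.sup id) + 1 :=
      Nat.succ_le_succ (Finset.le_sup (f := id) hj)
    have h2 : (d.support.sup id) + 1 ≤ N := Finset.le_sup (f := fun d => (d.support.sup id) + 1) hd
    omega
  have hval : ∀ d ∈ u, ∀ j, d j ≤ M := by
    intro d hd j
    by_cases hj : j ∈ d.support
    · have h1 : d j ≤ d.sum fun _ n => n :=
        Finset.single_le_sum (f := fun j => d j) (fun _ _ => Nat.zero_le _) hj
      exact le_trans h1 (Finset.le_sup (f := fun d => d.sum fun _ n => n) hd)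
    · simp [Finsupp.notMem_support_iff.1 hj]
  -- the box map
  set g : (Fin N → Fin (M + 1)) → (ℕ →₀ ℕ) := fun f =>
    Finsupp.onFinset (range N) (fun k => if h : k < N then (f ⟨k, h⟩ : ℕ) else 0)
      (fun k hk => by
        rw [Finset.mem_range]
        by_contra h
        exact hk (dif_neg h)) with hg
  have hg_apply : ∀ f (k : ℕ) (h : k < N), g f k = f ⟨k, h⟩ := by
    intro f k h; simp [hg, Finsupp.onFinset_apply, dif_pos h]
  have hg_inj : Function.Injective g := by
    intro f f' hff
    funext j
    have := congrArg (fun d : ℕ →₀ ℕ => d j.1) hff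
    simpa [hg_apply _ _ j.2, Fin.val_injective.eq_iff] using this
  have hsub : u ⊆ Finset.image g Finset.univ := by
    intro d hd
    rw [Finset.mem_image]
    refine ⟨fun j => ⟨d j.1, Nat.lt_succ_of_le (hval d hd j.1)⟩, Finset.mem_univ _, ?_⟩
    ext k
    by_cases h : k < N
    · exact hg_apply (fun j => ⟨d j.1, Nat.lt_succ_of_le (hval d hd j.1)⟩) k h
    · have hd0 : d k = 0 := by
        by_contra hk
        exact h (hsupp d hd k (Finsupp.mem_support_iff.2 hk))
      simp [hg, Finsupp.onFinset_apply, dif_neg h, hd0]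
  calc ∑ d ∈ u, r ^ wtF d ≤ ∑ d ∈ Finset.image g Finset.univ, r ^ wtF d :=
        Finset.sum_le_sum_of_subset_of_nonneg hsub (fun _ _ _ => pow_nonneg hr0 _)
    _ = ∑ f : Fin N → Fin (M + 1), r ^ wtF (g f) :=
        Finset.sum_image (fun a _ b _ h => hg_inj h)
    _ = ∑ f : Fin N → Fin (M + 1), ∏ j : Fin N, (r ^ (j.1 + 1)) ^ (f j : ℕ) := by
        refine Finset.sum_congr rfl fun f _ => ?_
        rw [wtF_eq_sum_range (N := N) (fun j hj => by
          by_contra h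
          exact (Finsupp.mem_support_iff.1 hj) (by simp [hg, Finsupp.onFinset_apply,
            dif_neg h])),
          ← Finset.prod_pow_eq_pow_sum]
        rw [← Fin.prod_univ_eq_prod_range (fun k => r ^ ((k + 1) * g f k)) N]
        refine Finset.prod_congr rfl fun j _ => ?_
        rw [hg_apply _ _ j.2, pow_mul]
    _ = ∏ j : Fin N, ∑ k : Fin (M + 1), (r ^ (j.1 + 1)) ^ (k : ℕ) := by
        rw [Finset.prod_univ_sum (fun _ => Finset.univ)]
        rw [Fintype.piFinset_univ]
    _ ≤ ∏ j : Fin N, Real.exp (A * r ^ (j.1 + 1)) := by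
        refine Finset.prod_le_prod (fun j _ => Finset.sum_nonneg fun k _ =>
          pow_nonneg (pow_nonneg hr0 _) _) fun j _ => ?_
        set x := r ^ (j.1 + 1) with hx
        have hx0 : 0 ≤ x := pow_nonneg hr0 _
        have hxr : x ≤ r := by
          rw [hx]
          calc r ^ (j.1 + 1) ≤ r ^ 1 := pow_le_pow_of_le_one hr0 hr1.le (by omega)
            _ = r := pow_one r
        have h1 : ∑ k : Fin (M + 1), x ^ (k : ℕ) = ∑ k ∈ range (M + 1), x ^ k :=
          Fin.sum_univ_eq_sum_range _ _
        have h2 : (1 - x)⁻¹ ≤ 1 + A * x := by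
          rw [inv_le_iff_one_le_mul₀ (by linarith [lt_of_le_of_lt hxr hr1] : (0:ℝ) < 1 - x)]
          have hAr : A * (1 - r) = 1 := inv_mul_cancel₀ (by linarith)
          nlinarith [mul_nonneg hA0.le hx0, mul_nonneg (mul_nonneg hA0.le hx0) hx0]
        have h3 : 1 + A * x ≤ Real.exp (A * x) := by
          have := Real.add_one_le_exp (A * x)
          linarith
        have h4 : ∑ k ∈ range (M + 1), x ^ k ≤ (1 - x)⁻¹ := by
          have hx1 : x < 1 := lt_of_le_of_lt hxr hr1
          calc ∑ k ∈ range (M + 1), x ^ k ≤ ∑' k : ℕ, x ^ k :=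
                Summable.sum_le_tsum _ (fun k _ => pow_nonneg hx0 _)
                  (summable_geometric_of_lt_one hx0 hx1)
            _ = (1 - x)⁻¹ := tsum_geometric_of_lt_one hx0 hx1
        rw [h1]
        exact le_trans h4 (le_trans h2 h3)
    _ = Real.exp (∑ j : Fin N, A * r ^ (j.1 + 1)) := (Real.exp_sum _ _).symm
    _ ≤ Real.exp (A * (A * r)) := by
        rw [Real.exp_le_exp]
        rw [← Finset.mul_sum]
        refine mul_le_mul_of_nonneg_left ?_ hA0.le
        rw [Fin.sum_univ_eq_sum_range (fun j => r ^ (j + 1)) N]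
        have : ∀ j ∈ range N, r ^ (j + 1) = r * r ^ j := fun j _ => by ring
        rw [Finset.sum_congr rfl this, ← Finset.mul_sum]
        rw [mul_comm A r]
        exact mul_le_mul_of_nonneg_left (hgeo r hr0 le_rfl N) hr0

lemma summable_norm_FF {w : ℕ → ℂ} {r : ℝ} (hr0 : 0 ≤ r) (hr1 : r < 1)
    (hw : ∀ j, ‖w j‖ ≤ r ^ (j + 1)) : Summable fun d : ℕ →₀ ℕ => ‖FF w d‖ :=
  (summable_rpow_wtF hr0 hr1).of_nonneg_of_le (fun _ => norm_nonneg _)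
    (fun d => norm_FF_le hr0 hw d)

lemma summable_FF {w : ℕ → ℂ} {r : ℝ} (hr0 : 0 ≤ r) (hr1 : r < 1)
    (hw : ∀ j, ‖w j‖ ≤ r ^ (j + 1)) : Summable (FF w) :=
  (summable_norm_FF hr0 hr1 hw).of_norm



lemma tsum_prod_mul {α β : Type*} {f : α → ℂ} {g : β → ℂ}
    (hf : Summable fun a => ‖f a‖) (hg : Summable fun b => ‖g b‖) :
    ∑' p : α × β, f p.1 * g p.2 = (∑' a, f a) * ∑' b, g b := by
  have hs : Summable fun p : α × β => f p.1 * g p.2 := summable_mul_of_summable_norm hf hg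
  have hb : ∀ b, Summable fun c => f b * g c := fun b => (hg.of_norm).mul_left _
  rw [Summable.tsum_prod' hs hb]
  calc ∑' a, ∑' b, f a * g b = ∑' a, f a * ∑' b, g b := tsum_congr fun a => tsum_mul_left
    _ = (∑' a, f a) * ∑' b, g b := tsum_mul_right

lemma term_le_wtF (d : ℕ →₀ ℕ) (j : ℕ) : (j + 1) * d j ≤ wtF d := by
  by_cases hj : j ∈ d.support
  · exact Finset.single_le_sum (f := fun j => (j + 1) * d j) (fun _ _ => Nat.zero_le _) hj
  · simp [Finsupp.notMem_support_iff.1 hj]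

lemma succ_le_wtF {d : ℕ →₀ ℕ} {j : ℕ} (h : j ∈ d.support) : j + 1 ≤ wtF d := by
  have h1 : 1 ≤ d j := Nat.one_le_iff_ne_zero.2 (Finsupp.mem_support_iff.1 h)
  have h2 : j + 1 ≤ (j + 1) * d j := Nat.le_mul_of_pos_right _ h1
  exact le_trans h2 (term_le_wtF d j)

lemma val_le_wtF (d : ℕ →₀ ℕ) (j : ℕ) : d j ≤ wtF d := by
  have h2 : d j ≤ (j + 1) * d j := Nat.le_mul_of_pos_left _ (Nat.succ_pos j)
  exact le_trans h2 (term_le_wtF d j)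

lemma finite_wtF_le (N : ℕ) : {d : ℕ →₀ ℕ | wtF d ≤ N}.Finite := by
  classical
  set g : (Fin N → Fin (N + 1)) → (ℕ →₀ ℕ) := fun f =>
    Finsupp.onFinset (Finset.range N) (fun k => if h : k < N then (f ⟨k, h⟩ : ℕ) else 0)
      (fun k hk => by
        rw [Finset.mem_range]; by_contra h; exact hk (dif_neg h)) with hg
  have hg_apply : ∀ f (k : ℕ) (h : k < N), g f k = f ⟨k, h⟩ := by
    intro f k h; simp [hg, Finsupp.onFinset_apply, dif_pos h]
  refine Set.Finite.subset (Set.finite_range g) ?_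
  intro d hd
  have hdN : wtF d ≤ N := hd
  have hsupp : ∀ j ∈ d.support, j < N := by
    intro j hj
    have := succ_le_wtF hj
    omega
  have hval : ∀ j, d j < N + 1 := by
    intro j
    have := val_le_wtF d j
    omega
  refine ⟨fun j => ⟨d j.1, hval j.1⟩, ?_⟩
  ext k
  by_cases h : k < N
  · exact hg_apply (fun j => ⟨d j.1, hval j.1⟩) k h
  · have hd0 : d k = 0 := by
      by_contra hk
      exact h (hsupp k (Finsupp.mem_support_iff.2 hk))
    simp [hg, Finsupp.onFinset_apply, dif_neg h, hd0]

/-- the set of multiplicity sequences supported below `N` -/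
def sset (N : ℕ) : Set (ℕ →₀ ℕ) := {d | ∀ j ∈ d.support, j < N}

noncomputable def ssetEquiv (N : ℕ) : (↥(sset N)) × ℕ ≃ ↥(sset (N + 1)) where
  toFun p := ⟨p.1.1 + Finsupp.single N p.2, by
    intro j hj
    rcases Finset.mem_union.1 (Finsupp.support_add hj) with h | h
    · exact Nat.lt_succ_of_lt (p.1.2 j h)
    · have := Finsupp.support_single_subset h
      rw [Finset.mem_singleton] at this
      omega⟩
  invFun x := (⟨Finsupp.erase N x.1, by
    intro j hj
    rw [Finsupp.support_erase, Finset.mem_erase] at hj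
    have := x.2 j hj.2
    omega⟩, x.1 N)
  left_inv p := by
    have hpN : p.1.1 N = 0 := by
      by_contra h
      exact absurd (p.1.2 N (Finsupp.mem_support_iff.2 h)) (lt_irrefl N)
    refine Prod.ext (Subtype.ext ?_) ?_
    · ext j
      by_cases h : j = N
      · subst h
        simp [Finsupp.erase_same, hpN]
      · simp [Finsupp.erase_ne h, Finsupp.single_apply, h]
    · simp [hpN]
  right_inv x := Subtype.ext (Finsupp.erase_add_single N x.1)

variable {w : ℕ → ℂ} {r : ℝ}

lemma A_zero (w : ℕ → ℂ) : ∑' (x : ↥(sset 0)), FF w ↑x = 1 := by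
  have h : sset 0 = {(0 : ℕ →₀ ℕ)} := by
    ext d
    simp only [sset, Set.mem_setOf_eq, Set.mem_singleton_iff]
    constructor
    · intro h
      rw [← Finsupp.support_eq_empty, Finset.eq_empty_iff_forall_notMem]
      intro j hj
      exact absurd (h j hj) (Nat.not_lt_zero j)
    · intro h j hj
      rw [h] at hj
      simp at hj
  rw [h, tsum_singleton 0 (FF w)]
  exact FF_zero w

lemma A_succ (hr0 : 0 ≤ r) (hr1 : r < 1) (hw : ∀ j, ‖w j‖ ≤ r ^ (j + 1)) (N : ℕ) :
    ∑' (x : ↥(sset (N + 1))), FF w ↑x =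
      (∑' (x : ↥(sset N)), FF w ↑x) * (1 - w N)⁻¹ := by
  have hnorm := summable_norm_FF hr0 hr1 hw
  have hwN : ‖w N‖ < 1 := norm_w_lt_one hr0 hr1 hw N
  rw [← (ssetEquiv N).tsum_eq (fun x : ↥(sset (N + 1)) => FF w ↑x)]
  have hterm : ∀ p : (↥(sset N)) × ℕ,
      FF w ((ssetEquiv N p : ↥(sset (N + 1))) : ℕ →₀ ℕ) = FF w ↑p.1 * w N ^ p.2 := by
    intro p
    show FF w (↑p.1 + Finsupp.single N p.2) = _
    rw [FF_add, FF_single]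
  rw [tsum_congr hterm]
  have hgeo : Summable fun n : ℕ => ‖w N ^ n‖ := by
    simpa [norm_pow] using summable_geometric_of_lt_one (norm_nonneg (w N)) hwN
  rw [tsum_prod_mul (hnorm.subtype _) hgeo, tsum_geometric_of_norm_lt_one hwN]

lemma A_prod (hr0 : 0 ≤ r) (hr1 : r < 1) (hw : ∀ j, ‖w j‖ ≤ r ^ (j + 1)) (N : ℕ) :
    (∑' (x : ↥(sset N)), FF w ↑x) * ∏ j ∈ Finset.range N, (1 - w j) = 1 := by
  induction N with
  | zero => simp [A_zero w]
  | succ N ih =>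
      rw [A_succ hr0 hr1 hw N, Finset.prod_range_succ]
      have h1 : (1 - w N) ≠ 0 := one_sub_ne_zero (norm_w_lt_one hr0 hr1 hw N)
      calc (∑' (x : ↥(sset N)), FF w ↑x) * (1 - w N)⁻¹ *
            ((∏ j ∈ Finset.range N, (1 - w j)) * (1 - w N))
          = ((∑' (x : ↥(sset N)), FF w ↑x) * ∏ j ∈ Finset.range N, (1 - w j)) *
            ((1 - w N)⁻¹ * (1 - w N)) := by ring
        _ = 1 := by rw [ih, inv_mul_cancel₀ h1, one_mul]

lemma tendsto_A (hr0 : 0 ≤ r) (hr1 : r < 1) (hw : ∀ j, ‖w j‖ ≤ r ^ (j + 1)) :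
    Tendsto (fun N => ∑' (x : ↥(sset N)), FF w ↑x) atTop (𝓝 (∑' d, FF w d)) := by
  have hnorm := summable_norm_FF hr0 hr1 hw
  have hsum := hnorm.of_norm
  set T : ℕ → Finset (ℕ →₀ ℕ) := fun N => (finite_wtF_le N).toFinset with hT
  have hTmono : Monotone T := by
    intro a b hab
    rw [hT]
    refine Set.Finite.toFinset_subset_toFinset.mpr ?_
    intro d hd
    exact le_trans hd hab
  have hTex : ∀ d : ℕ →₀ ℕ, ∃ N, d ∈ T N := fun d =>
    ⟨wtF d, by simp [hT, Set.Finite.mem_toFinset]⟩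
  have hTtend : Tendsto T atTop atTop := tendsto_atTop_finset_of_monotone hTmono hTex
  have hcompl : Tendsto (fun N => ∑' (x : {x : ℕ →₀ ℕ // x ∉ T N}), ‖FF w ↑x‖) atTop (𝓝 0) :=
    (tendsto_tsum_compl_atTop_zero (fun d => ‖FF w d‖)).comp hTtend
  have key : ∀ N, ‖(∑' d, FF w d) - ∑' (x : ↥(sset N)), FF w ↑x‖ ≤
      ∑' (x : {x : ℕ →₀ ℕ // x ∉ T N}), ‖FF w ↑x‖ := by
    intro N
    have hsplit := hsum.tsum_subtype_add_tsum_subtype_compl (sset N)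
    have h1 : (∑' d, FF w d) - ∑' (x : ↥(sset N)), FF w ↑x
        = ∑' (x : ↥(sset N)ᶜ), FF w ↑x := by
      rw [← hsplit]; ring
    rw [h1]
    refine le_trans (norm_tsum_le_tsum_norm (hnorm.subtype _)) ?_
    refine Summable.tsum_le_tsum_of_inj (fun x => ⟨x.1, ?_⟩) ?_ (fun _ _ => norm_nonneg _)
      (fun _ => le_refl _) (hnorm.subtype _) (hnorm.subtype _)
    · rcases x with ⟨d, hd⟩
      simp only [hT, Set.Finite.mem_toFinset, Set.mem_setOf_eq]
      simp only [Set.mem_compl_iff, sset, Set.mem_setOf_eq, not_forall] at hd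
      obtain ⟨j, hj, hjN⟩ := hd
      push_neg at hjN
      have h2 := succ_le_wtF hj
      omega
    · intro a b hab
      exact Subtype.ext (by simpa using congrArg Subtype.val hab)
  have h2 : Tendsto (fun N => (∑' d, FF w d) - ∑' (x : ↥(sset N)), FF w ↑x) atTop (𝓝 0) := by
    rw [tendsto_zero_iff_norm_tendsto_zero]
    exact squeeze_zero (fun _ => norm_nonneg _) key hcompl
  have h3 := Tendsto.const_sub (∑' d, FF w d) h2
  simpa using h3

/-- The main lemma: the sum over all multiplicity sequences of `∏ w j ^ d j`
times the product `∏ (1 - w j)` equals `1`. -/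
lemma tsum_FF_mul_tprod (hr0 : 0 ≤ r) (hr1 : r < 1) (hw : ∀ j, ‖w j‖ ≤ r ^ (j + 1)) :
    (∑' d, FF w d) * ∏' j : ℕ, (1 - w j) = 1 := by
  have h1 : Tendsto (fun N => (∑' (x : ↥(sset N)), FF w ↑x) * ∏ j ∈ Finset.range N, (1 - w j))
      atTop (𝓝 ((∑' d, FF w d) * ∏' j : ℕ, (1 - w j))) :=
    (tendsto_A hr0 hr1 hw).mul (multipliable_one_sub hr0 hr1 hw).hasProd.tendsto_prod_nat
  have h4 : Tendsto (fun N => (∑' (x : ↥(sset N)), FF w ↑x) * ∏ j ∈ Finset.range N, (1 - w j))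
      atTop (𝓝 1) := by
    simp only [A_prod hr0 hr1 hw]
    exact tendsto_const_nhds
  exact tendsto_nhds_unique h1 h4

lemma tprod_one_sub_ne_zero (hr0 : 0 ≤ r) (hr1 : r < 1) (hw : ∀ j, ‖w j‖ ≤ r ^ (j + 1)) :
    (∏' j : ℕ, (1 - w j)) ≠ 0 :=
  tprod_ne_zero hr0 hr1 hw

lemma tsum_FF_eq (hr0 : 0 ≤ r) (hr1 : r < 1) (hw : ∀ j, ‖w j‖ ≤ r ^ (j + 1)) :
    (∑' d, FF w d) = (∏' j : ℕ, (1 - w j))⁻¹ := by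
  have := tsum_FF_mul_tprod hr0 hr1 hw
  field_simp [tprod_ne_zero hr0 hr1 hw] at this ⊢
  linear_combination this



section QBinomial

variable {v q : ℂ} {r : ℝ}

/-- coefficients of the q-binomial series -/
noncomputable def qc (v q : ℂ) (n : ℕ) : ℂ :=
  ∏ j ∈ Finset.range n, (1 - q * v ^ (j + 1)) / (1 - v ^ (j + 1))

/-- the q-binomial series -/
noncomputable def Gq (v q u : ℂ) : ℂ := ∑' n : ℕ, qc v q n * u ^ n

/-- uniform bound for the coefficients -/
noncomputable def qK (r : ℝ) : ℝ := Real.exp ((1 + (1 - r)⁻¹) * ((1 - r)⁻¹ * r))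

lemma qK_nonneg (r : ℝ) : 0 ≤ qK r := (Real.exp_pos _).le

lemma one_sub_inv_le_exp {x r : ℝ} (hx0 : 0 ≤ x) (hxr : x ≤ r) (hr1 : r < 1) :
    (1 - x)⁻¹ ≤ Real.exp ((1 - r)⁻¹ * x) := by
  have hA0 : (0:ℝ) < (1 - r)⁻¹ := inv_pos.2 (by linarith)
  have h2 : (1 - x)⁻¹ ≤ 1 + (1 - r)⁻¹ * x := by
    rw [inv_le_iff_one_le_mul₀ (by linarith : (0:ℝ) < 1 - x)]
    have hAr : (1 - r)⁻¹ * (1 - r) = 1 := inv_mul_cancel₀ (by linarith)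
    nlinarith [mul_nonneg hA0.le hx0, mul_nonneg (mul_nonneg hA0.le hx0) hx0]
  have h3 : 1 + (1 - r)⁻¹ * x ≤ Real.exp ((1 - r)⁻¹ * x) := by
    have := Real.add_one_le_exp ((1 - r)⁻¹ * x)
    linarith
  linarith

lemma norm_qc_le (hr0 : 0 ≤ r) (hr1 : r < 1) (hv : ‖v‖ ≤ r) (hq : ‖q‖ ≤ 1) (n : ℕ) :
    ‖qc v q n‖ ≤ qK r := by
  have hA0 : (0:ℝ) < (1 - r)⁻¹ := inv_pos.2 (by linarith)
  have hnn : (0:ℝ) ≤ 1 + (1 - r)⁻¹ := by linarith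
  have hrj : ∀ j : ℕ, r ^ (j + 1) ≤ r := fun j => by
    calc r ^ (j + 1) ≤ r ^ 1 := pow_le_pow_of_le_one hr0 hr1.le (by omega)
      _ = r := pow_one r
  have hnorm_v : ∀ j : ℕ, ‖v ^ (j + 1)‖ ≤ r ^ (j + 1) := fun j => by
    rw [norm_pow]; exact pow_le_pow_left₀ (norm_nonneg v) hv _
  have hfac : ∀ j : ℕ, ‖(1 - q * v ^ (j + 1)) / (1 - v ^ (j + 1))‖ ≤
      Real.exp ((1 + (1 - r)⁻¹) * r ^ (j + 1)) := by
    intro j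
    rw [norm_div]
    have hnum : ‖1 - q * v ^ (j + 1)‖ ≤ 1 + r ^ (j + 1) := by
      calc ‖1 - q * v ^ (j + 1)‖ ≤ ‖(1:ℂ)‖ + ‖q * v ^ (j + 1)‖ := norm_sub_le _ _
        _ ≤ 1 + r ^ (j + 1) := by
            rw [norm_one, norm_mul]
            have := mul_le_mul hq (hnorm_v j) (norm_nonneg _) zero_le_one
            simpa using this
    have hden : (1:ℝ) - r ^ (j + 1) ≤ ‖1 - v ^ (j + 1)‖ := by
      have := norm_sub_norm_le (1 : ℂ) (v ^ (j + 1))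
      rw [norm_one] at this
      linarith [hnorm_v j]
    have hden0 : (0:ℝ) < 1 - r ^ (j + 1) := by
      have := lt_of_le_of_lt (hrj j) hr1; linarith
    have h1 : ‖1 - q * v ^ (j + 1)‖ / ‖1 - v ^ (j + 1)‖ ≤
        (1 + r ^ (j + 1)) * (1 - r ^ (j + 1))⁻¹ := by
      rw [div_eq_mul_inv]
      refine mul_le_mul hnum ?_ (inv_nonneg.2 (norm_nonneg _)) (by positivity)
      exact inv_anti₀ hden0 hden
    refine le_trans h1 ?_
    have e1 : (1:ℝ) + r ^ (j + 1) ≤ Real.exp (r ^ (j + 1)) := by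
      have := Real.add_one_le_exp (r ^ (j + 1)); linarith
    have e2 : ((1:ℝ) - r ^ (j + 1))⁻¹ ≤ Real.exp ((1 - r)⁻¹ * r ^ (j + 1)) :=
      one_sub_inv_le_exp (pow_nonneg hr0 _) (hrj j) hr1
    calc (1 + r ^ (j + 1)) * (1 - r ^ (j + 1))⁻¹
        ≤ Real.exp (r ^ (j + 1)) * Real.exp ((1 - r)⁻¹ * r ^ (j + 1)) :=
          mul_le_mul e1 e2 (by positivity) (Real.exp_pos _).le
      _ = Real.exp ((1 + (1 - r)⁻¹) * r ^ (j + 1)) := by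
          rw [← Real.exp_add]; ring_nf
  calc ‖qc v q n‖ = ∏ j ∈ Finset.range n, ‖(1 - q * v ^ (j + 1)) / (1 - v ^ (j + 1))‖ := by
        rw [qc, norm_prod]
    _ ≤ ∏ j ∈ Finset.range n, Real.exp ((1 + (1 - r)⁻¹) * r ^ (j + 1)) :=
        Finset.prod_le_prod (fun j _ => norm_nonneg _) (fun j _ => hfac j)
    _ = Real.exp (∑ j ∈ Finset.range n, (1 + (1 - r)⁻¹) * r ^ (j + 1)) := (Real.exp_sum _ _).symm
    _ ≤ qK r := by
        rw [qK, Real.exp_le_exp, ← Finset.mul_sum]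
        refine mul_le_mul_of_nonneg_left ?_ hnn
        have he : ∀ j ∈ Finset.range n, r ^ (j + 1) = r * r ^ j := fun j _ => by ring
        rw [Finset.sum_congr rfl he, ← Finset.mul_sum, mul_comm ((1 - r)⁻¹) r]
        refine mul_le_mul_of_nonneg_left ?_ hr0
        calc ∑ j ∈ Finset.range n, r ^ j ≤ ∑' j : ℕ, r ^ j :=
              Summable.sum_le_tsum _ (fun j _ => pow_nonneg hr0 _)
                (summable_geometric_of_lt_one hr0 hr1)
          _ = (1 - r)⁻¹ := tsum_geometric_of_lt_one hr0 hr1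

lemma qc_zero (v q : ℂ) : qc v q 0 = 1 := by simp [qc]

lemma qc_rec (hv1 : ‖v‖ < 1) (q : ℂ) (n : ℕ) :
    qc v q (n + 1) * (1 - v ^ (n + 1)) = qc v q n * (1 - q * v ^ (n + 1)) := by
  have h : (1 - v ^ (n + 1)) ≠ 0 := one_sub_ne_zero
    (by rw [norm_pow]; exact pow_lt_one₀ (norm_nonneg v) hv1 (Nat.succ_ne_zero n))
  rw [qc, Finset.prod_range_succ, ← qc]
  field_simp

lemma norm_qc_term_le (hr0 : 0 ≤ r) (hr1 : r < 1) (hv : ‖v‖ ≤ r) (hq : ‖q‖ ≤ 1)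
    {u : ℂ} (hu : ‖u‖ ≤ r) (n : ℕ) : ‖qc v q n * u ^ n‖ ≤ qK r * r ^ n := by
  rw [norm_mul, norm_pow]
  exact mul_le_mul (norm_qc_le hr0 hr1 hv hq n)
    (pow_le_pow_left₀ (norm_nonneg u) hu n) (pow_nonneg (norm_nonneg u) n) (qK_nonneg r)

lemma summable_qc (hr0 : 0 ≤ r) (hr1 : r < 1) (hv : ‖v‖ ≤ r) (hq : ‖q‖ ≤ 1)
    {u : ℂ} (hu : ‖u‖ ≤ r) : Summable fun n : ℕ => qc v q n * u ^ n :=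
  Summable.of_norm_bounded (((summable_geometric_of_lt_one hr0 hr1)).mul_left (qK r))
    (norm_qc_term_le hr0 hr1 hv hq hu)

lemma Gq_funeq (hr0 : 0 ≤ r) (hr1 : r < 1) (hv : ‖v‖ ≤ r) (hq : ‖q‖ ≤ 1)
    {u : ℂ} (hu : ‖u‖ ≤ r) :
    (1 - u) * Gq v q u = (1 - q * v * u) * Gq v q (v * u) := by
  have hv1 : ‖v‖ < 1 := lt_of_le_of_lt hv hr1
  have hvu : ‖v * u‖ ≤ r := by
    rw [norm_mul]
    calc ‖v‖ * ‖u‖ ≤ 1 * r := mul_le_mul hv1.le hu (norm_nonneg u) zero_le_one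
      _ = r := one_mul r
  have hs1 := summable_qc hr0 hr1 hv hq hu
  have hs2 := summable_qc hr0 hr1 hv hq hvu
  set b : ℕ → ℂ := fun n => qc v q n * u ^ n - qc v q n * (v * u) ^ n with hb
  set h : ℕ → ℂ := fun n =>
    (1 - u) * (qc v q n * u ^ n) - (1 - q * v * u) * (qc v q n * (v * u) ^ n) with hh
  have hhs : Summable h := (hs1.mul_left _).sub (hs2.mul_left _)
  have hpart : ∀ N, ∑ n ∈ Finset.range N, h n = b 0 - b N := by
    intro N
    rw [← Finset.sum_range_sub' b N]
    refine Finset.sum_congr rfl fun n _ => ?_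
    have hrec := qc_rec hv1 q n
    simp only [hh, hb]
    rw [mul_pow, mul_pow]
    ring_nf
    ring_nf at hrec
    linear_combination (u ^ (n + 1)) * hrec
  have hb0 : b 0 = 0 := by simp [hb]
  have hblim : Tendsto b atTop (𝓝 0) := by
    rw [tendsto_zero_iff_norm_tendsto_zero]
    have hbound : ∀ N, ‖b N‖ ≤ 2 * qK r * r ^ N := by
      intro N
      calc ‖b N‖ ≤ ‖qc v q N * u ^ N‖ + ‖qc v q N * (v * u) ^ N‖ := norm_sub_le _ _
        _ ≤ qK r * r ^ N + qK r * r ^ N :=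
            add_le_add (norm_qc_term_le hr0 hr1 hv hq hu N)
              (norm_qc_term_le hr0 hr1 hv hq hvu N)
        _ = 2 * qK r * r ^ N := by ring
    have hg : Tendsto (fun N : ℕ => 2 * qK r * r ^ N) atTop (𝓝 0) := by
      have := tendsto_pow_atTop_nhds_zero_of_lt_one hr0 hr1
      simpa using this.const_mul (2 * qK r)
    exact squeeze_zero (fun _ => norm_nonneg _) hbound hg
  have hsum0 : ∑' n, h n = 0 := by
    have h1 : Tendsto (fun N => ∑ n ∈ Finset.range N, h n) atTop (𝓝 (∑' n, h n)) :=
      hhs.hasSum.tendsto_sum_nat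
    have h2 : Tendsto (fun N => ∑ n ∈ Finset.range N, h n) atTop (𝓝 0) := by
      have h4 : Tendsto (fun N => b 0 - b N) atTop (𝓝 0) := by
        have h5 : Tendsto (fun N => b 0 - b N) atTop (𝓝 (b 0 - 0)) :=
          tendsto_const_nhds.sub hblim
        simpa [hb0] using h5
      exact Tendsto.congr (fun N => (hpart N).symm) h4
    exact tendsto_nhds_unique h1 h2
  have e : ∑' n, h n = (1 - u) * Gq v q u - (1 - q * v * u) * Gq v q (v * u) := by
    rw [Gq, Gq, ← tsum_mul_left, ← tsum_mul_left, ← Summable.tsum_sub (hs1.mul_left _) (hs2.mul_left _)]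
  rw [e] at hsum0
  linear_combination hsum0

lemma Gq_iter (hr0 : 0 ≤ r) (hr1 : r < 1) (hv : ‖v‖ ≤ r) (hq : ‖q‖ ≤ 1)
    {u : ℂ} (hu : ‖u‖ ≤ r) (N : ℕ) :
    Gq v q u * ∏ j ∈ Finset.range N, (1 - v ^ j * u) =
      (∏ j ∈ Finset.range N, (1 - q * v ^ (j + 1) * u)) * Gq v q (v ^ N * u) := by
  have hv1 : ‖v‖ < 1 := lt_of_le_of_lt hv hr1
  have hvNu : ∀ M : ℕ, ‖v ^ M * u‖ ≤ r := by
    intro M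
    rw [norm_mul, norm_pow]
    calc ‖v‖ ^ M * ‖u‖ ≤ 1 * r := by
          refine mul_le_mul ?_ hu (norm_nonneg u) zero_le_one
          exact pow_le_one₀ (norm_nonneg v) hv1.le
      _ = r := one_mul r
  induction N with
  | zero => simp
  | succ N ih =>
      rw [Finset.prod_range_succ, Finset.prod_range_succ, ← mul_assoc, ih]
      have hfe := Gq_funeq hr0 hr1 hv hq (hvNu N)
      -- (1 - v^N u) * Gq (v^N u) = (1 - q v (v^N u)) * Gq (v (v^N u))
      have e1 : v * (v ^ N * u) = v ^ (N + 1) * u := by ring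
      have e2 : q * v * (v ^ N * u) = q * v ^ (N + 1) * u := by ring
      rw [e1, e2] at hfe
      calc (∏ j ∈ Finset.range N, (1 - q * v ^ (j + 1) * u)) * Gq v q (v ^ N * u) *
            (1 - v ^ N * u)
          = (∏ j ∈ Finset.range N, (1 - q * v ^ (j + 1) * u)) *
            ((1 - v ^ N * u) * Gq v q (v ^ N * u)) := by ring
        _ = (∏ j ∈ Finset.range N, (1 - q * v ^ (j + 1) * u)) *
            ((1 - q * v ^ (N + 1) * u) * Gq v q (v ^ (N + 1) * u)) := by rw [hfe]
        _ = (∏ j ∈ Finset.range N, (1 - q * v ^ (j + 1) * u)) * (1 - q * v ^ (N + 1) * u) *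
            Gq v q (v ^ (N + 1) * u) := by ring

lemma Gq_tendsto_one (hr0 : 0 ≤ r) (hr1 : r < 1) (hv : ‖v‖ ≤ r) (hq : ‖q‖ ≤ 1)
    {u : ℂ} (hu : ‖u‖ ≤ r) :
    Tendsto (fun N => Gq v q (v ^ N * u)) atTop (𝓝 1) := by
  have hv1 : ‖v‖ < 1 := lt_of_le_of_lt hv hr1
  have hvNu : ∀ M : ℕ, ‖v ^ M * u‖ ≤ r := by
    intro M
    rw [norm_mul, norm_pow]
    calc ‖v‖ ^ M * ‖u‖ ≤ 1 * r := by
          refine mul_le_mul ?_ hu (norm_nonneg u) zero_le_one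
          exact pow_le_one₀ (norm_nonneg v) hv1.le
      _ = r := one_mul r
  have key : ∀ M : ℕ, ‖Gq v q (v ^ M * u) - 1‖ ≤ qK r * (1 - r)⁻¹ * (r ^ M * r) := by
    intro M
    set z := v ^ M * u with hz
    have hzr : ‖z‖ ≤ r := hvNu M
    have hzn : ‖z‖ ≤ r ^ M * r := by
      rw [hz, norm_mul, norm_pow]
      exact mul_le_mul (pow_le_pow_left₀ (norm_nonneg v) hv M) hu (norm_nonneg u)
        (pow_nonneg hr0 M)
    have hs := summable_qc hr0 hr1 hv hq hzr (u := z)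
    have e0 : Gq v q z - 1 = ∑' n, qc v q (n + 1) * z ^ (n + 1) := by
      rw [Gq, Summable.tsum_eq_zero_add hs, qc_zero]
      simp
    rw [e0]
    have hsub : Summable fun n => qc v q (n + 1) * z ^ (n + 1) :=
      (summable_nat_add_iff 1).2 hs
    refine le_trans (norm_tsum_le_tsum_norm (by simpa using hsub.norm)) ?_
    have hbound : ∀ n : ℕ, ‖qc v q (n + 1) * z ^ (n + 1)‖ ≤ qK r * r ^ n * ‖z‖ := by
      intro n
      rw [norm_mul, norm_pow, pow_succ]
      have h1 : ‖qc v q (n + 1)‖ ≤ qK r := norm_qc_le hr0 hr1 hv hq (n + 1)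
      have h2 : ‖z‖ ^ n ≤ r ^ n := pow_le_pow_left₀ (norm_nonneg z) hzr n
      have := mul_le_mul h1 (mul_le_mul h2 (le_refl ‖z‖) (norm_nonneg z)
        (pow_nonneg hr0 n)) (by positivity) (qK_nonneg r)
      calc ‖qc v q (n + 1)‖ * (‖z‖ ^ n * ‖z‖) ≤ qK r * (r ^ n * ‖z‖) := this
        _ = qK r * r ^ n * ‖z‖ := by ring
    calc ∑' n, ‖qc v q (n + 1) * z ^ (n + 1)‖ ≤ ∑' n : ℕ, qK r * r ^ n * ‖z‖ := by
          refine Summable.tsum_le_tsum hbound (by simpa using hsub.norm) ?_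
          simpa [mul_comm, mul_assoc] using
            (((summable_geometric_of_lt_one hr0 hr1).mul_left (qK r)).mul_right ‖z‖)
      _ = qK r * (1 - r)⁻¹ * ‖z‖ := by
          rw [tsum_mul_right, tsum_mul_left, tsum_geometric_of_lt_one hr0 hr1]
      _ ≤ qK r * (1 - r)⁻¹ * (r ^ M * r) := by
          refine mul_le_mul_of_nonneg_left hzn ?_
          have h9 : (0:ℝ) < (1 - r)⁻¹ := inv_pos.2 (by linarith)
          exact mul_nonneg (qK_nonneg r) h9.le
  have hgeo : Tendsto (fun M : ℕ => qK r * (1 - r)⁻¹ * (r ^ M * r)) atTop (𝓝 0) := by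
    have := tendsto_pow_atTop_nhds_zero_of_lt_one hr0 hr1
    have h2 := (this.mul_const r).const_mul (qK r * (1 - r)⁻¹)
    simpa using h2
  have : Tendsto (fun M => Gq v q (v ^ M * u) - 1) atTop (𝓝 0) := by
    rw [tendsto_zero_iff_norm_tendsto_zero]
    exact squeeze_zero (fun _ => norm_nonneg _) key hgeo
  have h3 := this.add_const 1
  simpa using h3

/-- the q-binomial theorem, product form -/
lemma Gq_eq (hr0 : 0 ≤ r) (hr1 : r < 1) (hv : ‖v‖ ≤ r) (hq : ‖q‖ ≤ 1)
    {u : ℂ} (hu : ‖u‖ ≤ r) :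
    Gq v q u * ∏' j : ℕ, (1 - v ^ j * u) = ∏' j : ℕ, (1 - q * v ^ (j + 1) * u) := by
  have hw1 : ∀ j : ℕ, ‖v ^ j * u‖ ≤ r ^ (j + 1) := by
    intro j
    rw [norm_mul, norm_pow, pow_succ]
    exact mul_le_mul (pow_le_pow_left₀ (norm_nonneg v) hv j) hu (norm_nonneg u)
      (pow_nonneg hr0 j)
  have hw2 : ∀ j : ℕ, ‖q * v ^ (j + 1) * u‖ ≤ r ^ (j + 1) := by
    intro j
    rw [norm_mul, norm_mul, norm_pow]
    calc ‖q‖ * ‖v‖ ^ (j + 1) * ‖u‖ ≤ 1 * r ^ (j + 1) * 1 := by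
          refine mul_le_mul (mul_le_mul hq (pow_le_pow_left₀ (norm_nonneg v) hv _)
            (pow_nonneg (norm_nonneg v) _) zero_le_one) (le_trans hu hr1.le)
            (norm_nonneg u) (by positivity)
      _ = r ^ (j + 1) := by ring
  have hm1 : Multipliable fun j : ℕ => 1 - v ^ j * u := multipliable_one_sub hr0 hr1 hw1
  have hm2 : Multipliable fun j : ℕ => 1 - q * v ^ (j + 1) * u :=
    multipliable_one_sub hr0 hr1 hw2
  have hL : Tendsto (fun N => Gq v q u * ∏ j ∈ Finset.range N, (1 - v ^ j * u)) atTop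
      (𝓝 (Gq v q u * ∏' j : ℕ, (1 - v ^ j * u))) :=
    (tendsto_const_nhds).mul hm1.hasProd.tendsto_prod_nat
  have hR : Tendsto (fun N => (∏ j ∈ Finset.range N, (1 - q * v ^ (j + 1) * u)) *
      Gq v q (v ^ N * u)) atTop (𝓝 ((∏' j : ℕ, (1 - q * v ^ (j + 1) * u)) * 1)) :=
    hm2.hasProd.tendsto_prod_nat.mul (Gq_tendsto_one hr0 hr1 hv hq hu)
  have := tendsto_nhds_unique (hL.congr fun N => Gq_iter hr0 hr1 hv hq hu N) hR
  simpa using this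

end QBinomial


lemma IntPartition.ext' {a b : IntPartition} (h : a.parts = b.parts) : a = b := by
  cases a; cases b; cases h; rfl

/-- partition associated to a multiplicity sequence: `parts i = ∑_{j ≥ i} d j` -/
noncomputable def toPart (d : ℕ →₀ ℕ) : IntPartition where
  parts i := ∑ j ∈ d.support.filter (fun j => i ≤ j), d j
  antitone' := by
    intro a b hab
    refine Finset.sum_le_sum_of_subset ?_
    intro j hj
    rw [Finset.mem_filter] at hj ⊢
    exact ⟨hj.1, le_trans hab hj.2⟩
  finite_support' := by
    refine ⟨(d.support.sup id) + 1, fun i hi => Finset.sum_eq_zero ?_⟩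
    intro j hj
    rw [Finset.mem_filter] at hj
    have h1 := Finset.le_sup (f := id) hj.1
    simp only [id_eq] at h1
    omega

lemma toPart_parts (d : ℕ →₀ ℕ) (i : ℕ) :
    (toPart d).parts i = ∑ j ∈ d.support.filter (fun j => i ≤ j), d j := rfl

lemma toPart_parts_succ (d : ℕ →₀ ℕ) (i : ℕ) :
    (toPart d).parts i = d i + (toPart d).parts (i + 1) := by
  classical
  rw [toPart_parts, toPart_parts, Finset.sum_filter, Finset.sum_filter]
  have hsplit : ∀ j ∈ d.support,
      (if i ≤ j then d j else 0) =
        (if j = i then d j else 0) + (if i + 1 ≤ j then d j else 0) := by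
    intro j _
    split_ifs <;> omega
  rw [Finset.sum_congr rfl hsplit, Finset.sum_add_distrib]
  congr 1
  rw [Finset.sum_ite_eq' d.support i (fun j => d j)]
  by_cases h : i ∈ d.support
  · simp [h]
  · simp [h, Finsupp.notMem_support_iff.1 h]

lemma toPart_parts_eq_zero (d : ℕ →₀ ℕ) {i : ℕ} (hi : ∀ j ∈ d.support, j < i) :
    (toPart d).parts i = 0 := by
  rw [toPart_parts, Finset.sum_eq_zero]
  intro j hj
  rw [Finset.mem_filter] at hj
  have := hi j hj.1
  omega

lemma toPart_wt (d : ℕ →₀ ℕ) : (toPart d).wt = wtF d := by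
  classical
  set N := (d.support.sup id) + 1 with hN
  have hsupp : ∀ j ∈ d.support, j < N := by
    intro j hj
    have h1 := Finset.le_sup (f := id) hj
    simp only [id_eq] at h1
    omega
  have hzero : ∀ i, N ≤ i → (toPart d).parts i = 0 := by
    intro i hi
    exact toPart_parts_eq_zero d (fun j hj => lt_of_lt_of_le (hsupp j hj) hi)
  have hhs : HasSum (toPart d).parts (∑ i ∈ Finset.range N, (toPart d).parts i) := by
    refine hasSum_sum_of_ne_finset_zero ?_
    intro i hi
    rw [Finset.mem_range, Nat.not_lt] at hi
    exact hzero i hi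
  rw [IntPartition.wt, hhs.tsum_eq]
  calc ∑ i ∈ Finset.range N, (toPart d).parts i
      = ∑ i ∈ Finset.range N, ∑ j ∈ d.support, (if i ≤ j then d j else 0) := by
        refine Finset.sum_congr rfl fun i _ => ?_
        rw [toPart_parts, Finset.sum_filter]
    _ = ∑ j ∈ d.support, ∑ i ∈ Finset.range N, (if i ≤ j then d j else 0) :=
        Finset.sum_comm
    _ = ∑ j ∈ d.support, (j + 1) * d j := by
        refine Finset.sum_congr rfl fun j hj => ?_
        rw [← Finset.sum_filter]
        have he : Finset.filter (fun i => i ≤ j) (Finset.range N) = Finset.range (j + 1) := by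
          ext i
          simp only [Finset.mem_filter, Finset.mem_range]
          constructor
          · intro h; omega
          · intro h
            have := hsupp j hj
            omega
        rw [he, Finset.sum_const, Finset.card_range, smul_eq_mul]
    _ = wtF d := rfl

lemma toPart_injective : Function.Injective toPart := by
  intro d d' h
  ext j
  have h1 := toPart_parts_succ d j
  have h2 := toPart_parts_succ d' j
  rw [h] at h1
  rw [h1] at h2
  omega

lemma toPart_surjective : Function.Surjective toPart := by
  intro lam
  obtain ⟨N, hN⟩ := lam.finite_support'
  set d : ℕ →₀ ℕ := Finsupp.onFinset (Finset.range N)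
    (fun j => lam.parts j - lam.parts (j + 1))
    (fun j hj => by
      rw [Finset.mem_range]
      by_contra h
      rw [Nat.not_lt] at h
      exact hj (show lam.parts j - lam.parts (j + 1) = 0 by
        rw [hN j h, hN (j + 1) (by omega)]) ) with hd
  refine ⟨d, ?_⟩
  have hdj : ∀ j, d j = lam.parts j - lam.parts (j + 1) := fun j => rfl
  have hdsupp : ∀ j ∈ d.support, j < N := by
    intro j hj
    rw [Finsupp.mem_support_iff] at hj
    by_contra h
    rw [Nat.not_lt] at h
    refine hj ?_
    rw [hdj, hN j h, hN (j + 1) (by omega)]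
    rfl
  have key : ∀ k i, N ≤ i + k → (toPart d).parts i = lam.parts i := by
    intro k
    induction k with
    | zero =>
        intro i hi
        rw [Nat.add_zero] at hi
        rw [toPart_parts_eq_zero d (fun j hj => lt_of_lt_of_le (hdsupp j hj) hi), hN i hi]
    | succ k ih =>
        intro i hi
        by_cases hiN : N ≤ i
        · rw [toPart_parts_eq_zero d (fun j hj => lt_of_lt_of_le (hdsupp j hj) hiN), hN i hiN]
        · rw [toPart_parts_succ d i, ih (i + 1) (by omega), hdj i]
          have hmono : lam.parts (i + 1) ≤ lam.parts i := lam.antitone' (by omega)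
          omega
  exact IntPartition.ext' (funext fun i => key N i (by omega))

/-- the equivalence between multiplicity sequences and partitions -/
noncomputable def partEquiv : (ℕ →₀ ℕ) ≃ IntPartition :=
  Equiv.ofBijective toPart ⟨toPart_injective, toPart_surjective⟩

lemma partEquiv_apply (d : ℕ →₀ ℕ) : partEquiv d = toPart d := rfl

lemma FF_pow (x : ℂ) (d : ℕ →₀ ℕ) : FF (fun j => x ^ (j + 1)) d = x ^ wtF d := by
  rw [FF, wtF, Finsupp.prod, Finsupp.sum, ← Finset.prod_pow_eq_pow_sum]
  exact Finset.prod_congr rfl fun j _ => by rw [← pow_mul]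

/-- the mixed weight family -/
noncomputable def wI (v q : ℂ) (i : ℕ) : ℕ → ℂ :=
  fun j => if j < i then v ^ (j + 1) else q * v ^ (j + 1)

lemma FF_wI (v q : ℂ) (i : ℕ) (d : ℕ →₀ ℕ) :
    FF (wI v q i) d = v ^ wtF d * q ^ ((toPart d).parts i) := by
  classical
  have hfac : ∀ j ∈ d.support,
      wI v q i j ^ d j = (v ^ (j + 1)) ^ d j * (if i ≤ j then q ^ d j else 1) := by
    intro j _
    by_cases h : j < i
    · rw [wI, if_pos h, if_neg (by omega), mul_one]
    · rw [wI, if_neg h, if_pos (by omega), mul_pow]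
      ring
  rw [FF, Finsupp.prod, Finset.prod_congr rfl hfac, Finset.prod_mul_distrib]
  congr 1
  · exact FF_pow v d
  · rw [← Finset.prod_filter, toPart_parts, ← Finset.prod_pow_eq_pow_sum]

section Assembly

variable {v q t : ℂ} {r : ℝ}

lemma norm_wI_le (hr1 : r < 1) (hv : ‖v‖ ≤ r) (hq : ‖q‖ ≤ 1) (i : ℕ) :
    ∀ j, ‖wI v q i j‖ ≤ r ^ (j + 1) := by
  intro j
  have hvj : ‖v ^ (j + 1)‖ ≤ r ^ (j + 1) := by
    rw [norm_pow]; exact pow_le_pow_left₀ (norm_nonneg v) hv _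
  by_cases h : j < i
  · rw [wI, if_pos h]; exact hvj
  · rw [wI, if_neg h, norm_mul]
    calc ‖q‖ * ‖v ^ (j + 1)‖ ≤ 1 * r ^ (j + 1) :=
          mul_le_mul hq hvj (norm_nonneg _) zero_le_one
      _ = r ^ (j + 1) := one_mul _

end Assembly

end BO

open BO Filter Topology Finset

/-- deformed Bloch–Okounkov one-point function.  For complex
`v, q, t` with `|v| < 1`, `|q| < 1`, `|t| < 1`, all series and products below
converge absolutely and
`Σ_{λ∈𝒫} v^{|λ|} (1/(1-q)) Σ_{i=1}^∞ t^{i-1} q^{λ_i}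
  = (∏_{i≥0}(1 - q t v^{i+1})) / (∏_{i≥0}(1 - q v^i)(1 - t v^i))`.
In the 0-indexed convention the inner sum is `Σ_{i≥0} t^i q^{λ_i}`. -/
theorem stmt_12 (v q t : ℂ) (hv : ‖v‖ < 1) (hq : ‖q‖ < 1)
    (ht : ‖t‖ < 1) :
    (∀ lam : IntPartition, Summable fun i : ℕ => t ^ i * q ^ lam.parts i) ∧
    Summable (fun lam : IntPartition =>
      v ^ lam.wt * ((1 - q)⁻¹ * ∑' i : ℕ, t ^ i * q ^ lam.parts i)) ∧
    Multipliable (fun i : ℕ => 1 - q * t * v ^ (i + 1)) ∧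
    Multipliable (fun i : ℕ => 1 - q * v ^ i) ∧
    Multipliable (fun i : ℕ => 1 - t * v ^ i) ∧
    ∑' lam : IntPartition,
        v ^ lam.wt * ((1 - q)⁻¹ * ∑' i : ℕ, t ^ i * q ^ lam.parts i) =
      (∏' i : ℕ, (1 - q * t * v ^ (i + 1))) /
        ((∏' i : ℕ, (1 - q * v ^ i)) * ∏' i : ℕ, (1 - t * v ^ i)) := by
  have hv' : ‖v‖ < 1 := hv
  have hq' : ‖q‖ < 1 := hq
  have ht' : ‖t‖ < 1 := ht
  set m : ℝ := max ‖v‖ (max ‖q‖ ‖t‖) with hm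
  have hm0 : 0 ≤ m := le_trans (norm_nonneg v) (le_max_left _ _)
  have hm1 : m < 1 := by
    rw [hm]
    exact max_lt hv' (max_lt hq' ht')
  set r : ℝ := (1 + m) / 2 with hr
  have hr0 : 0 ≤ r := by rw [hr]; linarith
  have hr1 : r < 1 := by rw [hr]; linarith
  have hmr : m ≤ r := by rw [hr]; linarith
  have hvr : ‖v‖ ≤ r := le_trans (le_max_left _ _) hmr
  have hqr : ‖q‖ ≤ r := le_trans (le_trans (le_max_left _ _) (le_max_right _ _)) hmr
  have htr : ‖t‖ ≤ r := le_trans (le_trans (le_max_right _ _) (le_max_right _ _)) hmr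
  have hq1 : ‖q‖ ≤ 1 := hq'.le
  -- weight-family bounds
  have hwI : ∀ i j, ‖wI v q i j‖ ≤ r ^ (j + 1) := fun i => norm_wI_le hr1 hvr hq1 i
  have hwq : ∀ j : ℕ, ‖q * v ^ j‖ ≤ r ^ (j + 1) := by
    intro j
    rw [norm_mul, norm_pow, pow_succ, mul_comm (r ^ j) r]
    exact mul_le_mul hqr (pow_le_pow_left₀ (norm_nonneg v) hvr j)
      (pow_nonneg (norm_nonneg v) j) hr0
  have hwt : ∀ j : ℕ, ‖t * v ^ j‖ ≤ r ^ (j + 1) := by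
    intro j
    rw [norm_mul, norm_pow, pow_succ, mul_comm (r ^ j) r]
    exact mul_le_mul htr (pow_le_pow_left₀ (norm_nonneg v) hvr j)
      (pow_nonneg (norm_nonneg v) j) hr0
  have hwqt : ∀ j : ℕ, ‖q * t * v ^ (j + 1)‖ ≤ r ^ (j + 1) := by
    intro j
    rw [norm_mul, norm_mul, norm_pow]
    calc ‖q‖ * ‖t‖ * ‖v‖ ^ (j + 1) ≤ 1 * 1 * r ^ (j + 1) := by
          refine mul_le_mul (mul_le_mul hq1 ht'.le (norm_nonneg t) zero_le_one)
            (pow_le_pow_left₀ (norm_nonneg v) hvr _) (pow_nonneg (norm_nonneg v) _)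
            (by norm_num)
      _ = r ^ (j + 1) := by ring
  have hwB : ∀ i j : ℕ, ‖q * v ^ (j + i + 1)‖ ≤ r ^ (j + 1) := by
    intro i j
    refine le_trans (hwq (j + i + 1)) ?_
    exact pow_le_pow_of_le_one hr0 hr1.le (by omega)
  -- claim 1 : inner summability
  have c1 : ∀ lam : IntPartition, Summable fun i : ℕ => t ^ i * q ^ lam.parts i := by
    intro lam
    refine Summable.of_norm_bounded (g := fun i => ‖t‖ ^ i)
      (summable_geometric_of_lt_one (norm_nonneg t) ht') ?_
    intro i
    rw [norm_mul, norm_pow, norm_pow]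
    exact mul_le_of_le_one_right (pow_nonneg (norm_nonneg t) i)
      (pow_le_one₀ (norm_nonneg q) hq'.le)
  have hnorm1 : ∀ lam : IntPartition, Summable fun i : ℕ => ‖t ^ i * q ^ lam.parts i‖ := by
    intro lam
    refine Summable.of_nonneg_of_le (fun _ => norm_nonneg _) ?_
      (summable_geometric_of_lt_one (norm_nonneg t) ht')
    intro i
    rw [norm_mul, norm_pow, norm_pow]
    exact mul_le_of_le_one_right (pow_nonneg (norm_nonneg t) i)
      (pow_le_one₀ (norm_nonneg q) hq'.le)
  have hX : ∀ lam : IntPartition, ‖∑' i : ℕ, t ^ i * q ^ lam.parts i‖ ≤ (1 - ‖t‖)⁻¹ := by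
    intro lam
    refine le_trans (norm_tsum_le_tsum_norm (hnorm1 lam)) ?_
    calc ∑' i : ℕ, ‖t ^ i * q ^ lam.parts i‖ ≤ ∑' i : ℕ, ‖t‖ ^ i := by
          refine Summable.tsum_le_tsum ?_ (hnorm1 lam)
            (summable_geometric_of_lt_one (norm_nonneg t) ht')
          intro i
          rw [norm_mul, norm_pow, norm_pow]
          exact mul_le_of_le_one_right (pow_nonneg (norm_nonneg t) i)
            (pow_le_one₀ (norm_nonneg q) hq'.le)
      _ = (1 - ‖t‖)⁻¹ := tsum_geometric_of_lt_one (norm_nonneg t) ht'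
  -- claim 2 : outer summability
  have c2 : Summable (fun lam : IntPartition =>
      v ^ lam.wt * ((1 - q)⁻¹ * ∑' i : ℕ, t ^ i * q ^ lam.parts i)) := by
    rw [← partEquiv.summable_iff]
    refine Summable.of_norm_bounded
      (g := fun d => ‖(1 - q)⁻¹‖ * (1 - ‖t‖)⁻¹ * r ^ wtF d)
      ((summable_rpow_wtF hr0 hr1).mul_left _) ?_
    intro d
    show ‖v ^ (partEquiv d).wt * ((1 - q)⁻¹ * ∑' i : ℕ, t ^ i * q ^ (partEquiv d).parts i)‖ ≤ _
    rw [partEquiv_apply, toPart_wt, norm_mul, norm_mul, norm_pow]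
    have h1 : ‖v‖ ^ wtF d ≤ r ^ wtF d := pow_le_pow_left₀ (norm_nonneg v) hvr _
    have h2 := hX (toPart d)
    have h3 : (0:ℝ) ≤ ‖(1 - q)⁻¹‖ := norm_nonneg _
    have h4 : (0:ℝ) ≤ (1 - ‖t‖)⁻¹ := inv_nonneg.2 (by linarith)
    calc ‖v‖ ^ wtF d * (‖(1 - q)⁻¹‖ * ‖∑' i : ℕ, t ^ i * q ^ (toPart d).parts i‖)
        ≤ r ^ wtF d * (‖(1 - q)⁻¹‖ * (1 - ‖t‖)⁻¹) := by
          refine mul_le_mul h1 (mul_le_mul_of_nonneg_left h2 h3) ?_ (pow_nonneg hr0 _)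
          positivity
      _ = ‖(1 - q)⁻¹‖ * (1 - ‖t‖)⁻¹ * r ^ wtF d := by ring
  -- multipliability
  have hM1 : Multipliable (fun i : ℕ => 1 - q * t * v ^ (i + 1)) :=
    multipliable_one_sub hr0 hr1 hwqt
  have hM2 : Multipliable (fun i : ℕ => 1 - q * v ^ i) :=
    multipliable_one_sub hr0 hr1 hwq
  have hM3 : Multipliable (fun i : ℕ => 1 - t * v ^ i) :=
    multipliable_one_sub hr0 hr1 hwt
  refine ⟨c1, c2, hM1, hM2, hM3, ?_⟩
  -- the main evaluation
  have key : ∀ (d : ℕ →₀ ℕ) (i : ℕ),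
      v ^ (toPart d).wt * (t ^ i * q ^ (toPart d).parts i) = t ^ i * FF (wI v q i) d := by
    intro d i
    rw [FF_wI, toPart_wt]
    ring
  have hsum_un : Summable (fun p : ℕ × (ℕ →₀ ℕ) => t ^ p.1 * FF (wI v q p.1) p.2) := by
    refine Summable.of_norm_bounded (g := fun p => ‖t‖ ^ p.1 * r ^ wtF p.2)
      ((summable_geometric_of_lt_one (norm_nonneg t) ht').mul_of_nonneg
        (summable_rpow_wtF hr0 hr1) (fun i => pow_nonneg (norm_nonneg t) i)
        (fun d => pow_nonneg hr0 _)) ?_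
    intro p
    rw [norm_mul, norm_pow]
    exact mul_le_mul (le_refl _) (norm_FF_le hr0 (hwI p.1) p.2) (norm_nonneg _)
      (pow_nonneg (norm_nonneg t) _)
  have hFFi : ∀ i, ∑' d : ℕ →₀ ℕ, FF (wI v q i) d = (∏' j : ℕ, (1 - wI v q i j))⁻¹ :=
    fun i => tsum_FF_eq hr0 hr1 (hwI i)
  -- splitting the mixed product
  have hsplit : ∀ i, ∏' j : ℕ, (1 - wI v q i j) =
      (∏ j ∈ range i, (1 - v ^ (j + 1))) * ∏' j : ℕ, (1 - q * v ^ (j + i + 1)) := by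
    intro i
    rw [tprod_split hr0 hr1 (hwI i) i]
    congr 1
    · exact Finset.prod_congr rfl fun j hj => by
        rw [wI, if_pos (Finset.mem_range.1 hj)]
    · exact tprod_congr fun j => by rw [wI, if_neg (by omega)]
  have hB0split : ∀ i, (∏' j : ℕ, (1 - q * v ^ (j + 1))) =
      (∏ j ∈ range i, (1 - q * v ^ (j + 1))) * ∏' j : ℕ, (1 - q * v ^ (j + i + 1)) := by
    intro i
    exact tprod_split (w := fun j => q * v ^ (j + 1)) hr0 hr1 (fun j => by
      simpa using hwB 0 j) i
  have hone_sub_v : ∀ j : ℕ, (1 - v ^ (j + 1)) ≠ 0 := by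
    intro j
    refine one_sub_ne_zero ?_
    rw [norm_pow]
    exact pow_lt_one₀ (norm_nonneg v) hv' (Nat.succ_ne_zero j)
  have hone_sub_qv : ∀ j : ℕ, (1 - q * v ^ (j + 1)) ≠ 0 := by
    intro j
    refine one_sub_ne_zero ?_
    refine lt_of_le_of_lt (by simpa using hwB 0 j) ?_
    exact pow_lt_one₀ hr0 hr1 (Nat.succ_ne_zero j)
  have hAne : ∀ i, (∏ j ∈ range i, (1 - v ^ (j + 1))) ≠ 0 :=
    fun i => Finset.prod_ne_zero_iff.2 fun j _ => hone_sub_v j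
  have hPne : ∀ i, (∏ j ∈ range i, (1 - q * v ^ (j + 1))) ≠ 0 :=
    fun i => Finset.prod_ne_zero_iff.2 fun j _ => hone_sub_qv j
  have hBne : ∀ i, (∏' j : ℕ, (1 - q * v ^ (j + i + 1))) ≠ 0 :=
    fun i => tprod_ne_zero hr0 hr1 (hwB i)
  have hqc : ∀ i, (∏' j : ℕ, (1 - wI v q i j))⁻¹ =
      qc v q i * (∏' j : ℕ, (1 - q * v ^ (j + 1)))⁻¹ := by
    intro i
    have hP := hPne i
    have hA := hAne i
    have hB := hBne i
    rw [hsplit i, hB0split i, qc, Finset.prod_div_distrib]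
    rw [mul_inv, mul_inv, div_eq_mul_inv]
    rw [show (∏ j ∈ range i, (1 - q * v ^ (j + 1))) * (∏ j ∈ range i, (1 - v ^ (j + 1)))⁻¹ *
        ((∏ j ∈ range i, (1 - q * v ^ (j + 1)))⁻¹ * (∏' j : ℕ, (1 - q * v ^ (j + i + 1)))⁻¹) =
        ((∏ j ∈ range i, (1 - q * v ^ (j + 1))) * (∏ j ∈ range i, (1 - q * v ^ (j + 1)))⁻¹) *
        ((∏ j ∈ range i, (1 - v ^ (j + 1)))⁻¹ * (∏' j : ℕ, (1 - q * v ^ (j + i + 1)))⁻¹)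
      from by ring, mul_inv_cancel₀ hP, one_mul]
  -- the double sum
  have hSd : (∑' d : ℕ →₀ ℕ, (v ^ (toPart d).wt *
      ∑' i : ℕ, t ^ i * q ^ (toPart d).parts i))
      = (∏' j : ℕ, (1 - q * v ^ (j + 1)))⁻¹ * Gq v q t := by
    have h1 : ∀ d : ℕ →₀ ℕ, (v ^ (toPart d).wt * ∑' i : ℕ, t ^ i * q ^ (toPart d).parts i)
        = ∑' i : ℕ, t ^ i * FF (wI v q i) d := by
      intro d
      rw [← tsum_mul_left]
      exact tsum_congr fun i => key d i
    have hcol : ∀ d : ℕ →₀ ℕ, Summable fun i : ℕ => t ^ i * FF (wI v q i) d := by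
      intro d
      refine Summable.of_norm_bounded (g := fun i => r ^ wtF d * ‖t‖ ^ i)
        (((summable_geometric_of_lt_one (norm_nonneg t) ht')).mul_left _) ?_
      intro i
      rw [norm_mul, norm_pow]
      calc ‖t‖ ^ i * ‖FF (wI v q i) d‖ ≤ ‖t‖ ^ i * r ^ wtF d :=
            mul_le_mul_of_nonneg_left (norm_FF_le hr0 (hwI i) d)
              (pow_nonneg (norm_nonneg t) i)
        _ = r ^ wtF d * ‖t‖ ^ i := by ring
    have e2 : (∑' (d : ℕ →₀ ℕ) (i : ℕ), t ^ i * FF (wI v q i) d)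
        = ∑' (i : ℕ) (d : ℕ →₀ ℕ), t ^ i * FF (wI v q i) d :=
      Summable.tsum_comm' hsum_un (fun i => hsum_un.prod_factor i) hcol
    rw [tsum_congr h1, e2]
    calc ∑' (i : ℕ) (d : ℕ →₀ ℕ), t ^ i * FF (wI v q i) d
        = ∑' i : ℕ, t ^ i * ∑' d : ℕ →₀ ℕ, FF (wI v q i) d :=
          tsum_congr fun i => tsum_mul_left
      _ = ∑' i : ℕ, qc v q i * t ^ i * (∏' j : ℕ, (1 - q * v ^ (j + 1)))⁻¹ :=
          tsum_congr fun i => by rw [hFFi i, hqc i]; ring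
      _ = (∑' i : ℕ, qc v q i * t ^ i) * (∏' j : ℕ, (1 - q * v ^ (j + 1)))⁻¹ :=
          tsum_mul_right
      _ = (∏' j : ℕ, (1 - q * v ^ (j + 1)))⁻¹ * Gq v q t := by rw [Gq]; ring
  -- q-binomial
  have hGq := Gq_eq hr0 hr1 hvr hq1 htr
  have hPt : (∏' j : ℕ, (1 - v ^ j * t)) = ∏' i : ℕ, (1 - t * v ^ i) :=
    tprod_congr fun j => by ring
  have hPqt : (∏' j : ℕ, (1 - q * v ^ (j + 1) * t)) = ∏' i : ℕ, (1 - q * t * v ^ (i + 1)) :=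
    tprod_congr fun j => by ring
  rw [hPt, hPqt] at hGq
  -- ∏ (1 - q v^i) = (1-q) * ∏ (1 - q v^{j+1})
  have hPq : (∏' i : ℕ, (1 - q * v ^ i)) = (1 - q) * ∏' j : ℕ, (1 - q * v ^ (j + 1)) := by
    rw [tprod_split hr0 hr1 hwq 1, Finset.prod_range_one]
    norm_num
  have hPtne : (∏' i : ℕ, (1 - t * v ^ i)) ≠ 0 := tprod_ne_zero hr0 hr1 hwt
  have h1q : (1 - q) ≠ 0 := one_sub_ne_zero hq'
  have hB0ne : (∏' j : ℕ, (1 - q * v ^ (j + 1))) ≠ 0 := by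
    have := hBne 0
    refine ne_of_eq_of_ne (tprod_congr fun j => ?_) this
    norm_num
  -- final assembly
  calc ∑' lam : IntPartition, v ^ lam.wt * ((1 - q)⁻¹ * ∑' i : ℕ, t ^ i * q ^ lam.parts i)
      = ∑' d : ℕ →₀ ℕ, v ^ (partEquiv d).wt *
          ((1 - q)⁻¹ * ∑' i : ℕ, t ^ i * q ^ (partEquiv d).parts i) :=
        (partEquiv.tsum_eq _).symm
    _ = (1 - q)⁻¹ * ∑' d : ℕ →₀ ℕ, (v ^ (toPart d).wt *
          ∑' i : ℕ, t ^ i * q ^ (toPart d).parts i) := by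
        rw [← tsum_mul_left]
        exact tsum_congr fun d => by rw [partEquiv_apply]; ring
    _ = (1 - q)⁻¹ * ((∏' j : ℕ, (1 - q * v ^ (j + 1)))⁻¹ * Gq v q t) := by rw [hSd]
    _ = (∏' i : ℕ, (1 - q * t * v ^ (i + 1))) /
        ((∏' i : ℕ, (1 - q * v ^ i)) * ∏' i : ℕ, (1 - t * v ^ i)) := by
        rw [hPq, ← hGq, eq_div_iff (mul_ne_zero (mul_ne_zero h1q hB0ne) hPtne)]
        have e9 : (1 - q)⁻¹ * ((∏' j : ℕ, (1 - q * v ^ (j + 1)))⁻¹ * Gq v q t) *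
            ((1 - q) * (∏' j : ℕ, (1 - q * v ^ (j + 1))) * ∏' i : ℕ, (1 - t * v ^ i)) =
            ((1 - q)⁻¹ * (1 - q)) * ((∏' j : ℕ, (1 - q * v ^ (j + 1)))⁻¹ *
              (∏' j : ℕ, (1 - q * v ^ (j + 1)))) * (Gq v q t * ∏' i : ℕ, (1 - t * v ^ i)) := by
          ring
        rw [e9, inv_mul_cancel₀ h1q, inv_mul_cancel₀ hB0ne, one_mul, one_mul]
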